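/- For every ρ > 0, the integral ∫₀^∞ (e^{-ρx}/(1+x)) (ρx − 2) x dx is strictly negative. -/

import Mathlib

open MeasureTheory Real Set Filter Asymptotics

lemma aux_tendsto (ρ : ℝ) (hρ : 0 < ρ) (n : ℕ) :
    Filter.Tendsto (fun x : ℝ => x ^ n * Real.exp (-ρ * x)) atTop (nhds 0) := by
  have h0 := Real.tendsto_pow_mul_exp_neg_atTop_nhds_zero n
  have hφ : Filter.Tendsto (fun x : ℝ => ρ * x) atTop atTop :=
    Filter.tendsto_id.const_mul_atTop hρ
  have h1 : Filter.Tendsto (fun x : ℝ => (ρ * x) ^ n * Real.exp (-(ρ * x))) atTop (nhds 0) :=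
    h0.comp hφ
  have h2 := h1.const_mul ((ρ⁻¹) ^ n)
  rw [mul_zero] at h2
  refine h2.congr (fun x => ?_)
  rw [neg_mul, mul_pow]
  rw [inv_pow, ← mul_assoc, ← mul_assoc, inv_mul_cancel₀ (pow_ne_zero n hρ.ne'), one_mul]


lemma aux_bigO (ρ : ℝ) (hρ : 0 < ρ) (n : ℕ) :
    (fun x : ℝ => x ^ n * Real.exp (-ρ * x)) =O[atTop]
      (fun x : ℝ => Real.exp (-(ρ/2) * x)) := by
  have h1 := aux_tendsto (ρ/2) (half_pos hρ) n
  have h2 := (h1.isBigO_one ℝ).mul (isBigO_refl (fun x : ℝ => Real.exp (-(ρ/2) * x)) atTop)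
  refine (h2.congr (fun x => ?_) (fun x => by simp)).congr_left (fun x => rfl)
  rw [mul_assoc, ← Real.exp_add]
  ring_nf


lemma aux_int (ρ : ℝ) (hρ : 0 < ρ) (n : ℕ) :
    IntegrableOn (fun x : ℝ => x ^ n * Real.exp (-ρ * x)) (Set.Ioi 0) := by
  refine integrable_of_isBigO_exp_neg (half_pos hρ) ?_ (aux_bigO ρ hρ n)
  exact (Continuous.mul (continuous_pow n) (Real.continuous_exp.comp
    (continuous_const.mul continuous_id))).continuousOn

lemma aux_gamma (ρ : ℝ) (hρ : 0 < ρ) (n : ℕ) :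
    ∫ x in Set.Ioi (0:ℝ), x ^ n * Real.exp (-ρ * x) = (1/ρ) ^ (n+1) * ((Nat.factorial n : ℕ) : ℝ) := by
  have h := Real.integral_rpow_mul_exp_neg_mul_Ioi (a := (n:ℝ)+1) (r := ρ)
    (by positivity) hρ
  rw [show ((n:ℝ)+1) - 1 = (n:ℝ) by ring] at h
  calc ∫ x in Set.Ioi (0:ℝ), x ^ n * Real.exp (-ρ * x)
      = ∫ x in Set.Ioi (0:ℝ), x ^ ((n:ℝ)) * Real.exp (-(ρ * x)) := by
        refine setIntegral_congr_fun measurableSet_Ioi (fun x hx => ?_)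
        rw [Real.rpow_natCast, neg_mul]
    _ = (1/ρ) ^ ((n:ℝ)+1) * Real.Gamma ((n:ℝ)+1) := h
    _ = (1/ρ) ^ (n+1) * ((Nat.factorial n : ℕ) : ℝ) := by
        rw [Real.Gamma_nat_eq_factorial, show ((n:ℝ)+1) = ((n+1 : ℕ):ℝ) by push_cast; ring,
          Real.rpow_natCast]

theorem stmt_7 (ρ : ℝ) (hρ : 0 < ρ) :
    ∫ x in Set.Ioi (0 : ℝ), Real.exp (-ρ * x) / (1 + x) * (ρ * x - 2) * x < 0 := by
  set f : ℝ → ℝ := fun x => Real.exp (-ρ * x) / (1 + x) * (ρ * x - 2) * x with hf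
  set g : ℝ → ℝ := fun x => ρ / (ρ + 2) * (ρ * (x ^ 2 * Real.exp (-ρ * x))
    - 2 * (x ^ 1 * Real.exp (-ρ * x))) with hg
  -- integrability of f
  have hcontf : ContinuousOn f (Set.Ici 0) := by
    apply ContinuousOn.mul
    apply ContinuousOn.mul
    · exact ContinuousOn.div
        ((Real.continuous_exp.comp (continuous_const.mul continuous_id)).continuousOn)
        ((continuous_const.add continuous_id).continuousOn)
        (fun x hx => by simp only [Set.mem_Ici] at hx; positivity)
    · exact ((continuous_const.mul continuous_id).sub continuous_const).continuousOn
    · exact continuous_id.continuousOn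
  have hOf : f =O[atTop] (fun x : ℝ => Real.exp (-(ρ/2) * x)) := by
    have hinv : (fun x : ℝ => 1/(1+x)) =O[atTop] (fun _ : ℝ => (1:ℝ)) := by
      refine Filter.Tendsto.isBigO_one ℝ (c := (0:ℝ)) ?_
      exact tendsto_const_nhds.div_atTop (Filter.tendsto_atTop_add_const_left _ _ Filter.tendsto_id)
    have hcomb : (fun x : ℝ => ρ * (x ^ 2 * Real.exp (-ρ * x))
        - 2 * (x ^ 1 * Real.exp (-ρ * x))) =O[atTop] (fun x : ℝ => Real.exp (-(ρ/2) * x)) :=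
      ((aux_bigO ρ hρ 2).const_mul_left ρ).sub ((aux_bigO ρ hρ 1).const_mul_left 2)
    exact (hinv.mul hcomb).congr (fun x => by simp only [hf]; ring) (fun x => one_mul _)
  have hIf : IntegrableOn f (Set.Ioi 0) :=
    integrable_of_isBigO_exp_neg (half_pos hρ) hcontf hOf
  have hI1 := aux_int ρ hρ 1
  have hI2 := aux_int ρ hρ 2
  have hIg : IntegrableOn g (Set.Ioi 0) :=
    (((hI2.const_mul ρ).sub (hI1.const_mul 2)).const_mul _)
  -- value of ∫ g
  have hg0 : ∫ x in Set.Ioi (0:ℝ), g x = 0 := by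
    simp only [hg]
    rw [integral_const_mul, integral_sub (hI2.const_mul ρ) (hI1.const_mul 2),
      integral_const_mul, integral_const_mul, aux_gamma ρ hρ 1, aux_gamma ρ hρ 2]
    norm_num [Nat.factorial]
    right
    field_simp
    ring
  -- pointwise identity for g - f
  have hkey : ∀ x ∈ Set.Ioi (0:ℝ),
      g x - f x = Real.exp (-ρ * x) * x * (ρ * x - 2) ^ 2 / ((ρ + 2) * (1 + x)) := by
    intro x hx
    simp only [Set.mem_Ioi] at hx
    have h1 : (1:ℝ) + x ≠ 0 := by positivity
    have h2 : ρ + 2 ≠ 0 := by positivity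
    simp only [hf, hg]
    field_simp
    ring
  have hnonneg : 0 ≤ᵐ[volume.restrict (Set.Ioi (0:ℝ))] (fun x => g x - f x) := by
    rw [EventuallyLE, ae_restrict_iff' measurableSet_Ioi]
    refine Filter.Eventually.of_forall (fun x hx => ?_)
    rw [Pi.zero_apply, hkey x hx]
    have hx' : 0 < x := hx
    positivity
  have hID : IntegrableOn (fun x => g x - f x) (Set.Ioi 0) := hIg.sub hIf
  have hpos : 0 < ∫ x in Set.Ioi (0:ℝ), (g x - f x) := by
    rw [setIntegral_pos_iff_support_of_nonneg_ae hnonneg hID]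
    refine lt_of_lt_of_le ?_ (measure_mono (s := Set.Ioi (2/ρ)) ?_)
    · simp [Real.volume_Ioi]
    · intro x hx
      simp only [Set.mem_Ioi] at hx
      have hx0 : 0 < x := lt_trans (by positivity) hx
      have hρx : 0 < ρ * x - 2 := by
        rw [sub_pos]
        calc (2:ℝ) = ρ * (2/ρ) := by field_simp
        _ < ρ * x := by exact mul_lt_mul_of_pos_left hx hρ
      constructor
      · rw [Function.mem_support, hkey x hx0]
        positivity
      · exact hx0
  have hsub : ∫ x in Set.Ioi (0:ℝ), (g x - f x) =
      (∫ x in Set.Ioi (0:ℝ), g x) - ∫ x in Set.Ioi (0:ℝ), f x :=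
    integral_sub hIg hIf
  rw [hsub, hg0] at hpos
  linarith
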